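/- Let n ≥ 1, let A be a real n×n matrix and B ∈ ℝⁿ, and let R = ∏_{j=1}^n [a_j, b_j] be a rectangle with a_j < b_j for all j. Fix a coordinate i, and set C* = Σ_{j≠i} min(A_{ij}·a_j, A_{ij}·b_j) and c = C* + B_i. Assume A_{ii} ≠ 0 and that there exists ε > 0 with A_{ii}·y + c ≥ ε for all y ∈ [a_i, b_i]. Let x : ℝ → ℝⁿ be differentiable with ẋ(t) = A·x(t) + B for all t, x(0) ∈ R and x(0)_i = a_i. Define T^max = (1/A_{ii})·ln((A_{ii}·b_i + c)/(A_{ii}·a_i + c)). If x(t) ∈ R for all t ∈ [0, T^max], then there exists t ∈ [0, T^max] with x(t)_i = b_i; that is, the trajectory reaches the facet {x : x_i = b_i} of the rectangle within time T^max. -/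

import Mathlib

/-- Theorem 1 of the paper (main claim): for the linear system ẋ = A·x + B on a
rectangle `R = ∏ [a j, b j]`, if the drift in direction `i` is bounded below by a
positive constant on the rectangle, then a trajectory starting on the facet
`{x : x i = a i}` and remaining in `R` reaches the opposite facet `{x : x i = b i}`
within time `Tmax = (1 / A i i) * log ((A i i * b i + c)/(A i i * a i + c))`. -/
theorem facet_reached_within_Tmax
    (n : ℕ) (hn : 1 ≤ n)
    (A : Matrix (Fin n) (Fin n) ℝ) (B : Fin n → ℝ)
    (a b : Fin n → ℝ) (hab : ∀ j, a j < b j)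
    (i : Fin n)
    (Cstar c : ℝ)
    (hC : Cstar = ∑ j ∈ Finset.univ.erase i, min (A i j * a j) (A i j * b j))
    (hc : c = Cstar + B i)
    (hAii : A i i ≠ 0)
    (hε : ∃ ε > 0, ∀ y ∈ Set.Icc (a i) (b i), A i i * y + c ≥ ε)
    (x : ℝ → Fin n → ℝ)
    (hx : ∀ t, HasDerivAt x (A.mulVec (x t) + B) t)
    (hx0 : ∀ j, x 0 j ∈ Set.Icc (a j) (b j))
    (hxi0 : x 0 i = a i)
    (Tmax : ℝ)
    (hT : Tmax = (1 / A i i) * Real.log ((A i i * b i + c) / (A i i * a i + c)))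
    (hstay : ∀ t ∈ Set.Icc (0 : ℝ) Tmax, ∀ j, x t j ∈ Set.Icc (a j) (b j)) :
    ∃ t ∈ Set.Icc (0 : ℝ) Tmax, x t i = b i := by
  obtain ⟨ε, hε0, hεb⟩ := hε
  set K := A i i with hK
  have hKa : 0 < K * a i + c := lt_of_lt_of_le hε0 (hεb (a i) ⟨le_refl _, (hab i).le⟩)
  have hKb : 0 < K * b i + c := lt_of_lt_of_le hε0 (hεb (b i) ⟨(hab i).le, le_refl _⟩)
  set r : ℝ := (K * b i + c) / (K * a i + c) with hr
  have hrpos : 0 < r := div_pos hKb hKa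
  -- Tmax ≥ 0
  have hT0 : 0 < Tmax := by
    rcases lt_or_gt_of_ne hAii with hKneg | hKpos
    · have h1 : K * b i + c < K * a i + c := by nlinarith [hab i]
      have hr1 : r < 1 := (div_lt_one hKa).2 h1
      have : Real.log r < 0 := Real.log_neg hrpos hr1
      rw [hT]
      have : (1 / K) < 0 := by
        simpa using one_div_neg.2 hKneg
      nlinarith [Real.log_neg hrpos hr1]
    · have h1 : K * a i + c < K * b i + c := by nlinarith [hab i]
      have hr1 : 1 < r := (one_lt_div hKa).2 h1
      rw [hT]
      have h2 : 0 < Real.log r := Real.log_pos hr1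
      have h3 : 0 < 1 / K := by positivity
      nlinarith
  -- exp (K * Tmax) = r
  have hexp : Real.exp (K * Tmax) = r := by
    rw [hT]
    have : K * (1 / K * Real.log ((K * b i + c) / (K * a i + c))) = Real.log r := by
      field_simp
      rfl
    rw [this, Real.exp_log hrpos]
  -- f and its derivative
  set f : ℝ → ℝ := fun t => x t i with hf
  set d : ℝ → ℝ := fun t => (A.mulVec (x t) + B) i with hd
  have hf' : ∀ t, HasDerivAt f (d t) t := fun t => hasDerivAt_pi.1 (hx t) i
  -- derivative lower bound on the rectangle
  have hdlb : ∀ t ∈ Set.Icc (0:ℝ) Tmax, K * f t + c ≤ d t := by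
    intro t ht
    have hsum : Cstar ≤ ∑ j ∈ Finset.univ.erase i, A i j * x t j := by
      rw [hC]
      apply Finset.sum_le_sum
      intro j hj
      obtain ⟨h1, h2⟩ := hstay t ht j
      rcases le_total 0 (A i j) with hpos | hneg
      · exact le_trans (min_le_left _ _) (by nlinarith)
      · exact le_trans (min_le_right _ _) (by nlinarith)
    have : d t = A i i * x t i + ∑ j ∈ Finset.univ.erase i, A i j * x t j + B i := by
      simp only [hd, Pi.add_apply, Matrix.mulVec, dotProduct]
      rw [← Finset.add_sum_erase Finset.univ (fun j => A i j * x t j) (Finset.mem_univ i)]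
    rw [this, hc]
    have : K * f t = A i i * x t i := rfl
    linarith
  -- the auxiliary monotone function
  set g : ℝ → ℝ := fun t => (f t + c / K) * Real.exp (-(K * t)) with hg
  have hg' : ∀ t, HasDerivAt g ((d t - (K * f t + c)) * Real.exp (-(K * t))) t := by
    intro t
    have h1 : HasDerivAt (fun s => f s + c / K) (d t) t := (hf' t).add_const _
    have h2 : HasDerivAt (fun s : ℝ => Real.exp (-(K * s))) (Real.exp (-(K * t)) * (-K)) t := by
      have : HasDerivAt (fun s : ℝ => -(K * s)) (-K) t := by
        have h0 : HasDerivAt (fun s : ℝ => K * s) K t := by simpa using (hasDerivAt_id t).const_mul K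
        exact h0.neg
      exact (Real.hasDerivAt_exp _).comp t this
    have := h1.mul h2
    have hK0 : K ≠ 0 := hAii
    have hcK : c / K * K = c := div_mul_cancel₀ c hK0
    have e : (d t - (K * f t + c)) * Real.exp (-(K * t))
        = d t * Real.exp (-(K * t)) + (f t + c / K) * (Real.exp (-(K * t)) * (-K)) := by
      linear_combination (Real.exp (-(K * t))) * hcK
    rw [e]
    exact this
  have hmono : MonotoneOn g (Set.Icc 0 Tmax) := by
    apply monotoneOn_of_hasDerivWithinAt_nonneg (convex_Icc 0 Tmax)
      (f' := fun t => (d t - (K * f t + c)) * Real.exp (-(K * t)))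
    · exact fun t _ => ((hg' t).continuousAt).continuousWithinAt
    · intro t ht
      exact ((hg' t).hasDerivWithinAt)
    · intro t ht
      rw [interior_Icc] at ht
      have ht' : t ∈ Set.Icc (0:ℝ) Tmax := ⟨ht.1.le, ht.2.le⟩
      have := hdlb t ht'
      have := Real.exp_pos (-(K * t))
      nlinarith
  have hgT : g 0 ≤ g Tmax :=
    hmono (Set.left_mem_Icc.2 hT0.le) (Set.right_mem_Icc.2 hT0.le) hT0.le
  -- translate to f Tmax ≥ b i
  have hg0 : g 0 = a i + c / K := by
    simp [hg, hf, hxi0]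
  have hfT : b i ≤ f Tmax := by
    have hE : Real.exp (-(K * Tmax)) = 1 / r := by
      rw [Real.exp_neg, hexp]; exact inv_eq_one_div r
    have : a i + c / K ≤ (f Tmax + c / K) * (1 / r) := by
      rw [← hE, ← hg0]; exact hgT
    have hK0 : K ≠ 0 := hAii
    have hbc : (a i + c / K) * r = b i + c / K := by
      rw [hr]
      have hKa' : K * a i + c ≠ 0 := hKa.ne'
      field_simp
      ring
      rw [← add_mul, mul_comm (a i) K, mul_inv_cancel₀ hKa']
    have h2 : (a i + c / K) * r ≤ f Tmax + c / K := by
      rw [← le_div_iff₀ hrpos]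
      calc a i + c / K ≤ (f Tmax + c / K) * (1 / r) := this
        _ = (f Tmax + c / K) / r := by ring
    rw [hbc] at h2
    linarith
  refine ⟨Tmax, Set.right_mem_Icc.2 hT0.le, le_antisymm ?_ hfT⟩
  exact (hstay Tmax (Set.right_mem_Icc.2 hT0.le) i).2
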